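/- Let G be a connected graph whose every block is a cycle or a clique and which has at least two blocks, and let B_s be a leaf of the block graph B(G), corresponding to an induced subgraph H = H_1 ∪_v ⋯ ∪_v H_l of G (l ≥ 2 blocks glued at a common cut vertex v). Then there exists an index i ∈ [l] such that for every j ≠ i, all vertices of H_j except possibly v belong to no block of G other than H_j. -/

import Mathlib

open SimpleGraph

/-- `v` is a cut vertex of `G`: some two vertices distinct from `v` are connected in `G`
but not after deleting `v`. -/
def SimpleGraph.IsCutVertex {V : Type*} (G : SimpleGraph V) (v : V) : Prop :=
  ∃ u w : V, ∃ (hu : u ≠ v) (hw : w ≠ v), G.Reachable u w ∧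
    ¬ (G.induce {x | x ≠ v}).Reachable ⟨u, hu⟩ ⟨w, hw⟩

/-- `B` is (the vertex set of) a block of `G`: a maximal connected subgraph with no
cut vertex. -/
def SimpleGraph.IsBlock {V : Type*} (G : SimpleGraph V) (B : Set V) : Prop :=
  B.Nonempty ∧ (G.induce B).Connected ∧ (∀ v, ¬ (G.induce B).IsCutVertex v) ∧
    ∀ C : Set V, B ⊆ C → (G.induce C).Connected →
      (∀ v, ¬ (G.induce C).IsCutVertex v) → B = C

/-- The block `B` of `G` is a cycle of length `r`. -/
def SimpleGraph.IsCycleBlock {V : Type*} (G : SimpleGraph V) (B : Set V) (r : ℕ) : Prop :=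
  G.IsBlock B ∧ Nonempty ((G.induce B) ≃g cycleGraph r)

/-- The block graph `B(G)` of `G`: vertices are the blocks of `G`, two blocks being
adjacent exactly when they share a common cut vertex of `G`. -/
def blockGraphOf {V : Type*} (G : SimpleGraph V) :
    SimpleGraph {B : Set V // G.IsBlock B} :=
  SimpleGraph.fromRel (fun B₁ B₂ => ∃ v : V, v ∈ B₁.1 ∧ v ∈ B₂.1 ∧ G.IsCutVertex v)

section Helpers

open SimpleGraph

variable {V : Type*} (G : SimpleGraph V)

/-- All pairs of vertices of `A` are connected within the induced graph on `A`. -/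
def Pcon (A : Set V) : Prop :=
  ∀ x y (hx : x ∈ A) (hy : y ∈ A), (G.induce A).Reachable ⟨x, hx⟩ ⟨y, hy⟩

variable {G}

lemma reach_mono {A B : Set V} (h : A ⊆ B) {x y : V} {hx : x ∈ A} {hy : y ∈ A}
    (hr : (G.induce A).Reachable ⟨x, hx⟩ ⟨y, hy⟩) :
    (G.induce B).Reachable ⟨x, h hx⟩ ⟨y, h hy⟩ := by
  exact hr.map (⟨fun a => ⟨a.1, h a.2⟩, fun ha => ha⟩ : G.induce A →g G.induce B)

lemma pc_congr {A B : Set V} (h : A = B) (hA : Pcon G A) : Pcon G B := h ▸ hA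

lemma pc_union {A B : Set V} (hA : Pcon G A) (hB : Pcon G B) {t : V}
    (htA : t ∈ A) (htB : t ∈ B) : Pcon G (A ∪ B) := by
  intro x y hx hy
  have key : ∀ z (hz : z ∈ A ∪ B), (G.induce (A ∪ B)).Reachable ⟨z, hz⟩
      ⟨t, Or.inl htA⟩ := by
    intro z hz
    rcases hz with h1 | h1
    · exact reach_mono Set.subset_union_left (hA z t h1 htA)
    · have := reach_mono (Set.subset_union_right (s := A)) (hB z t h1 htB)
      exact this
  exact (key x hx).trans (key y hy).symm

lemma pc_chain : ∀ (m : ℕ) (g : ℕ → Set V), (∀ i ≤ m, Pcon G (g i)) →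
    (∀ i < m, (g i ∩ g (i + 1)).Nonempty) → Pcon G {x | ∃ i ≤ m, x ∈ g i} := by
  intro m
  induction m with
  | zero =>
    intro g hpc _
    refine pc_congr (A := g 0) ?_ (hpc 0 le_rfl)
    ext x; simp
  | succ m IH =>
    intro g hpc hlink
    have h1 : Pcon G {x | ∃ i ≤ m, x ∈ g i} :=
      IH g (fun i hi => hpc i (hi.trans (Nat.le_succ m))) (fun i hi => hlink i (hi.trans (Nat.lt_succ_self m)))
    obtain ⟨t, ht1, ht2⟩ := hlink m (Nat.lt_succ_self m)
    have h2 : Pcon G ({x | ∃ i ≤ m, x ∈ g i} ∪ g (m + 1)) :=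
      pc_union h1 (hpc (m + 1) le_rfl) (t := t) ⟨m, le_rfl, ht1⟩ ht2
    refine pc_congr ?_ h2
    ext x
    simp only [Set.mem_union, Set.mem_setOf_eq]
    constructor
    · rintro (⟨i, hi, hx⟩ | hx)
      · exact ⟨i, hi.trans (Nat.le_succ m), hx⟩
      · exact ⟨m + 1, le_rfl, hx⟩
    · rintro ⟨i, hi, hx⟩
      rcases Nat.lt_succ_iff_lt_or_eq.mp (Nat.lt_succ_of_le hi) with h | rfl
      · exact Or.inl ⟨i, Nat.lt_succ_iff.mp h, hx⟩
      · exact Or.inr hx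

lemma pc_of_connected {A : Set V} (h : (G.induce A).Connected) : Pcon G A :=
  fun x y hx hy => h.preconnected ⟨x, hx⟩ ⟨y, hy⟩

lemma pc_block_diff {C : Set V} (hC : G.IsBlock C) (z : V) : Pcon G (C \ {z}) := by
  by_cases hz : z ∈ C
  · intro x y hx hy
    have hnc := hC.2.2.1 ⟨z, hz⟩
    rw [SimpleGraph.IsCutVertex] at hnc
    push_neg at hnc
    have hux : (⟨x, hx.1⟩ : ↥C) ≠ ⟨z, hz⟩ := fun h => hx.2 (congrArg Subtype.val h)
    have huy : (⟨y, hy.1⟩ : ↥C) ≠ ⟨z, hz⟩ := fun h => hy.2 (congrArg Subtype.val h)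
    have hr := hnc ⟨x, hx.1⟩ ⟨y, hy.1⟩ hux huy
      (hC.2.1.preconnected ⟨x, hx.1⟩ ⟨y, hy.1⟩)
    exact hr.map (⟨fun a => ⟨a.1.1, a.1.2, fun h => a.2 (Subtype.ext h)⟩, fun ha => ha⟩ :
      ((G.induce C).induce {a | a ≠ (⟨z, hz⟩ : ↥C)}) →g G.induce (C \ {z}))
  · have h : C = C \ {z} := (Set.diff_singleton_eq_self hz).symm
    exact pc_congr h (pc_of_connected hC.2.1)

lemma noCut_of_pc_diff {U : Set V} (h : ∀ z : V, Pcon G (U \ {z})) :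
    ∀ c, ¬ (G.induce U).IsCutVertex c := by
  rintro c ⟨u, w, hu, hw, -, hnr⟩
  apply hnr
  have hu' : u.1 ∈ U \ {c.1} := ⟨u.2, fun h' => hu (Subtype.ext h')⟩
  have hw' : w.1 ∈ U \ {c.1} := ⟨w.2, fun h' => hw (Subtype.ext h')⟩
  have hr := h c.1 u.1 w.1 hu' hw'
  exact hr.map (⟨fun a => ⟨⟨a.1, a.2.1⟩, fun h' => a.2.2 (congrArg Subtype.val h')⟩,
    fun ha => ha⟩ : G.induce (U \ {c.1}) →g (G.induce U).induce {x | x ≠ c})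

lemma block_eq_of_subset {A B : Set V} (hA : G.IsBlock A) (hB : G.IsBlock B)
    (h : A ⊆ B) : A = B :=
  hA.2.2.2 B h hB.2.1 hB.2.2.1

/-- A cyclic chain of pairwise-linked `Pcon` sets, with at most one broken link (at
position `k`), has `Pcon` union. -/
lemma ring_pc {G : SimpleGraph V} (c : ℕ → Set V) (N : ℕ) (hpc : ∀ m ≤ N, Pcon G (c m))
    (t : ℕ → V) (k : ℕ) (hkN : k ≤ N)
    (hlink : ∀ m ≤ N, m ≠ k → t m ∈ c m ∧ t m ∈ c (if m = N then 0 else m + 1)) :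
    Pcon G {x | ∃ m ≤ N, x ∈ c m} := by
  obtain ⟨σ, hσ⟩ : ∃ σ : ℕ → ℕ, ∀ j, σ j = if k + 1 + j ≤ N then k + 1 + j
      else k + 1 + j - (N + 1) := ⟨_, fun j => rfl⟩
  have hσle : ∀ j ≤ N, σ j ≤ N := by
    intro j hj; rw [hσ]; split_ifs with h <;> omega
  have hσne : ∀ j < N, σ j ≠ k := by
    intro j hj; rw [hσ]; split_ifs with h <;> omega
  have hσnext : ∀ j < N, σ (j + 1) = if σ j = N then 0 else σ j + 1 := by
    intro j hj
    rw [hσ, hσ j]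
    split_ifs with h1 h2 h3 h2 h3 <;> omega
  have hchain := pc_chain (G := G) N (fun j => c (σ j))
    (fun j hj => hpc (σ j) (hσle j hj))
    (by
      intro j hj
      obtain ⟨m1, m2⟩ := hlink (σ j) (hσle j hj.le) (hσne j hj)
      refine ⟨t (σ j), m1, ?_⟩
      show t (σ j) ∈ c (σ (j + 1))
      rw [hσnext j hj]
      by_cases h : σ j = N
      · simpa [h] using m2
      · simpa [h] using m2)
  refine pc_congr ?_ hchain
  ext x
  simp only [Set.mem_setOf_eq]
  constructor
  · rintro ⟨j, hj, hx⟩; exact ⟨σ j, hσle j hj, hx⟩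
  · rintro ⟨m, hm, hx⟩
    by_cases h : k + 1 ≤ m
    · refine ⟨m - (k + 1), by omega, ?_⟩
      show x ∈ c (σ (m - (k + 1)))
      have : σ (m - (k + 1)) = m := by rw [hσ]; split_ifs with h' <;> omega
      rw [this]; exact hx
    · refine ⟨m + N - k, by omega, ?_⟩
      show x ∈ c (σ (m + N - k))
      have : σ (m + N - k) = m := by rw [hσ]; split_ifs with h' <;> omega
      rw [this]; exact hx

/-- Key lemma: if a chain of blocks `F 0, …, F n` (consecutive ones intersecting)
has `F 0` meeting a block `D` in `a` and `F n` meeting `D` in `b ≠ a`, then `D`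
occurs in the chain. -/
lemma key' {G : SimpleGraph V} : ∀ n : ℕ, ∀ (D : Set V) (F : ℕ → Set V), G.IsBlock D →
    (∀ i ≤ n, G.IsBlock (F i)) → (∀ i < n, (F i ∩ F (i + 1)).Nonempty) →
    ∀ a b : V, a ∈ D → a ∈ F 0 → b ∈ D → b ∈ F n → a ≠ b → ∃ j ≤ n, F j = D := by
  intro n
  induction n using Nat.strong_induction_on with
  | _ n IH =>
  intro D F hD hF hFi a b haD haF hbD hbF hab
  by_cases hex : ∃ j ≤ n, F j = D
  · exact hex
  push_neg at hex
  exfalso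
  -- Reduction 1 : `a` occurs only in `F 0`
  by_cases h1 : ∃ i, 0 < i ∧ i ≤ n ∧ a ∈ F i
  · obtain ⟨i, hi0, hin, hai⟩ := h1
    obtain ⟨j, hj, hjD⟩ := IH (n - i) (by omega) D (fun k => F (i + k)) hD
      (fun k hk => hF (i + k) (by omega))
      (fun k hk => by
        show (F (i + k) ∩ F (i + (k + 1))).Nonempty
        rw [show i + (k + 1) = i + k + 1 by omega]
        exact hFi (i + k) (by omega))
      a b haD (by simpa using hai) hbD
      (by show b ∈ F (i + (n - i)); rw [show i + (n - i) = n by omega]; exact hbF) hab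
    exact hex (i + j) (by omega) hjD
  push_neg at h1
  -- Reduction 2 : `b` occurs only in `F n`
  by_cases h2 : ∃ i, i < n ∧ b ∈ F i
  · obtain ⟨i, hin, hbi⟩ := h2
    obtain ⟨j, hj, hjD⟩ := IH i hin D F hD (fun k hk => hF k (by omega))
      (fun k hk => hFi k (by omega)) a b haD haF hbD hbi hab
    exact hex j (by omega) hjD
  push_neg at h2
  -- Reduction 3 : non-consecutive members of the chain are disjoint
  by_cases h3 : ∃ i j, i + 1 < j ∧ j ≤ n ∧ (F i ∩ F j).Nonempty
  · obtain ⟨i, j, hij, hjn, hne⟩ := h3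
    obtain ⟨σ, hσ⟩ : ∃ σ : ℕ → ℕ, ∀ k, σ k = if k ≤ i then k else k + j - (i + 1) :=
      ⟨_, fun k => rfl⟩
    have hn' : n + i + 1 - j < n := by omega
    obtain ⟨j', hj', hjD⟩ := IH (n + i + 1 - j) hn' D (fun k => F (σ k)) hD
      (fun k hk => by
        show G.IsBlock (F (σ k))
        rw [hσ]; split_ifs with h
        · exact hF k (by omega)
        · exact hF _ (by omega))
      (fun k hk => by
        show (F (σ k) ∩ F (σ (k + 1))).Nonempty
        rw [hσ, hσ]
        rcases lt_trichotomy k i with h | heq | h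
        · rw [if_pos h.le, if_pos (by omega)]
          exact hFi k (by omega)
        · rw [if_pos heq.le, if_neg (by omega), show k + 1 + j - (i + 1) = j by omega, heq]
          exact hne
        · rw [if_neg (by omega), if_neg (by omega),
            show k + 1 + j - (i + 1) = (k + j - (i + 1)) + 1 by omega]
          exact hFi _ (by omega))
      a b haD (by show a ∈ F (σ 0); rw [hσ, if_pos (Nat.zero_le i)]; exact haF) hbD
      (by
        show b ∈ F (σ (n + i + 1 - j))
        rw [hσ, if_neg (by omega), show n + i + 1 - j + j - (i + 1) = n by omega]
        exact hbF) hab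
    have hjD' : F (σ j') = D := hjD
    rw [hσ] at hjD'
    split_ifs at hjD' with h
    · exact hex j' (by omega) hjD'
    · exact hex _ (by omega) hjD'
  push_neg at h3
  -- the connecting vertices
  have hy' : ∀ i, ∃ t, i < n → t ∈ F i ∩ F (i + 1) := by
    intro i
    by_cases h : i < n
    · exact (hFi i h).imp fun t ht _ => ht
    · exact ⟨a, fun h' => absurd h' h⟩
  choose y hy using hy'
  have hya : ∀ i, i < n → y i ≠ a := fun i hi he =>
    h1 (i + 1) (by omega) (by omega) (he ▸ (hy i hi).2)
  have hyb : ∀ i, i < n → y i ≠ b := fun i hi he => h2 i hi (he ▸ (hy i hi).1)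
  have hyy : ∀ i j, i < j → j < n → y i ≠ y j := by
    intro i j hij hj he
    have hmem : y i ∈ F i ∩ F (j + 1) := ⟨(hy i (by omega)).1, he ▸ (hy j hj).2⟩
    rw [h3 i (j + 1) (by omega) (by omega)] at hmem
    exact hmem
  -- the ring of blocks and its connecting vertices
  obtain ⟨c, hc0, hcs⟩ : ∃ c : ℕ → Set V, c 0 = D ∧ ∀ m, c (m + 1) = F m :=
    ⟨fun m => match m with | 0 => D | (m + 1) => F m, rfl, fun m => rfl⟩
  obtain ⟨t, ht0, htm, htN⟩ : ∃ t : ℕ → V, t 0 = a ∧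
      (∀ m, m + 1 ≤ n → t (m + 1) = y m) ∧ t (n + 1) = b := by
    refine ⟨fun m => if m = 0 then a else if m ≤ n then y (m - 1) else b, rfl,
      fun m h2 => ?_, ?_⟩
    · show (if m + 1 = 0 then a else if m + 1 ≤ n then y (m + 1 - 1) else b) = y m
      rw [if_neg (by omega), if_pos h2, Nat.add_sub_cancel]
    · show (if n + 1 = 0 then a else if n + 1 ≤ n then y (n + 1 - 1) else b) = b
      rw [if_neg (by omega), if_neg (by omega)]
  have hU : Pcon G {x | ∃ m ≤ n + 1, x ∈ c m} := by
    refine ring_pc c (n + 1) ?_ t (n + 1) le_rfl ?_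
    · intro m hm
      rcases m with _ | m
      · rw [hc0]; exact pc_of_connected hD.2.1
      · rw [hcs]; exact pc_of_connected (hF m (by omega)).2.1
    · intro m hm hmk
      rw [if_neg hmk]
      rcases m with _ | m
      · rw [hc0, hcs, ht0]; exact ⟨haD, haF⟩
      · rw [hcs, hcs, htm m (by omega)]
        exact ⟨(hy m (by omega)).1, (hy m (by omega)).2⟩
  -- the union with one vertex removed
  have hUz : ∀ z : V, Pcon G ({x | ∃ m ≤ n + 1, x ∈ c m} \ {z}) := by
    intro z
    have hkex : ∃ k ≤ n + 1, ∀ m ≤ n + 1, m ≠ k → t m ≠ z := by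
      by_cases hza : z = a
      · refine ⟨0, by omega, ?_⟩
        intro m hm hm0
        rw [hza]
        rcases m with _ | m
        · exact absurd rfl hm0
        · by_cases h : m + 1 ≤ n
          · rw [htm m h]; exact hya m (by omega)
          · rw [show m + 1 = n + 1 by omega, htN]; exact hab.symm
      · by_cases hzy : ∃ i, i < n ∧ z = y i
        · obtain ⟨i, hi, rfl⟩ := hzy
          refine ⟨i + 1, by omega, ?_⟩
          intro m hm hmk
          rcases m with _ | m
          · rw [ht0]; exact fun h => hya i hi h.symm
          · by_cases h : m + 1 ≤ n
            · rw [htm m h]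
              rcases lt_or_gt_of_ne (show m ≠ i by omega) with h' | h'
              · exact hyy m i h' hi
              · exact fun he => hyy i m h' (by omega) he.symm
            · rw [show m + 1 = n + 1 by omega, htN]
              exact fun he => hyb i hi he.symm
        · refine ⟨n + 1, le_rfl, ?_⟩
          intro m hm hmk
          rcases m with _ | m
          · rw [ht0]; exact fun h => hza h.symm
          · have h : m + 1 ≤ n := by omega
            rw [htm m h]
            exact fun h' => hzy ⟨m, by omega, h'.symm⟩
    obtain ⟨k, hkN, hk⟩ := hkex
    have hring := ring_pc (G := G) (fun m => c m \ {z}) (n + 1)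
      (by
        intro m hm
        rcases m with _ | m
        · show Pcon G (c 0 \ {z})
          rw [hc0]; exact pc_block_diff hD z
        · show Pcon G (c (m + 1) \ {z})
          rw [hcs]; exact pc_block_diff (hF m (by omega)) z)
      t k hkN
      (by
        intro m hm hmk
        have htz : t m ≠ z := hk m hm hmk
        by_cases hmN : m = n + 1
        · subst hmN
          rw [if_pos rfl]
          show t (n + 1) ∈ c (n + 1) \ {z} ∧ t (n + 1) ∈ c 0 \ {z}
          rw [hcs, hc0, htN]
          have hbz : b ≠ z := htN ▸ htz
          exact ⟨⟨hbF, hbz⟩, ⟨hbD, hbz⟩⟩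
        · rw [if_neg hmN]
          rcases m with _ | m
          · show t 0 ∈ c 0 \ {z} ∧ t 0 ∈ c (0 + 1) \ {z}
            rw [hc0, hcs, ht0]
            have haz : a ≠ z := ht0 ▸ htz
            exact ⟨⟨haD, haz⟩, ⟨haF, haz⟩⟩
          · show t (m + 1) ∈ c (m + 1) \ {z} ∧ t (m + 1) ∈ c (m + 1 + 1) \ {z}
            have h : m + 1 ≤ n := by omega
            rw [hcs, hcs, htm m h]
            have hyz : y m ≠ z := (htm m h) ▸ htz
            exact ⟨⟨(hy m (by omega)).1, hyz⟩, ⟨(hy m (by omega)).2, hyz⟩⟩)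
    refine pc_congr ?_ hring
    ext x
    simp only [Set.mem_setOf_eq, Set.mem_diff, Set.mem_singleton_iff]
    constructor
    · rintro ⟨m, hm, hx, hxz⟩; exact ⟨⟨m, hm, hx⟩, hxz⟩
    · rintro ⟨⟨m, hm, hx⟩, hxz⟩; exact ⟨m, hm, hx, hxz⟩
  -- conclude by maximality of `D`
  have hconn : (G.induce {x | ∃ m ≤ n + 1, x ∈ c m}).Connected := by
    haveI : Nonempty ↥{x | ∃ m ≤ n + 1, x ∈ c m} := ⟨⟨a, 0, by omega, hc0.symm ▸ haD⟩⟩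
    exact SimpleGraph.Connected.mk fun x y => hU x.1 y.1 x.2 y.2
  have hDU := hD.2.2.2 {x | ∃ m ≤ n + 1, x ∈ c m}
    (fun x hx => ⟨0, by omega, hc0.symm ▸ hx⟩) hconn (noCut_of_pc_diff hUz)
  have hF0D : F 0 ⊆ D := by
    intro x hx
    rw [hDU]
    exact ⟨1, by omega, (hcs 0).symm ▸ hx⟩
  exact hex 0 (by omega) (block_eq_of_subset (hF 0 (by omega)) hD hF0D)

lemma exists_block_superset [Fintype V] {G : SimpleGraph V} {A : Set V}
    (hne : A.Nonempty) (hconn : (G.induce A).Connected)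
    (hnc : ∀ v, ¬ (G.induce A).IsCutVertex v) : ∃ B, A ⊆ B ∧ G.IsBlock B := by
  classical
  set s : Set (Set V) := {C | A ⊆ C ∧ (G.induce C).Connected ∧
    ∀ v, ¬ (G.induce C).IsCutVertex v} with hs
  have hsne : s.Nonempty := ⟨A, subset_rfl, hconn, hnc⟩
  obtain ⟨B, hB, hBmax⟩ := Set.Finite.exists_maximalFor Set.ncard s (Set.toFinite s) hsne
  refine ⟨B, hB.1, hne.mono hB.1, hB.2.1, hB.2.2, ?_⟩
  intro C hBC hCconn hCnc
  have hCs : C ∈ s := ⟨hB.1.trans hBC, hCconn, hCnc⟩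
  exact Set.eq_of_subset_of_ncard_le hBC
    (hBmax hCs (Set.ncard_le_ncard hBC (Set.toFinite C))) (Set.toFinite C)

lemma edge_block [Fintype V] {G : SimpleGraph V} {p q : V} (h : G.Adj p q) :
    ∃ B, p ∈ B ∧ q ∈ B ∧ G.IsBlock B := by
  have hpq : p ≠ q := h.ne
  have hconn : (G.induce ({p, q} : Set V)).Connected := by
    haveI : Nonempty ↥({p, q} : Set V) := ⟨⟨p, Or.inl rfl⟩⟩
    refine SimpleGraph.Connected.mk ?_
    rintro ⟨x, hx⟩ ⟨y, hy⟩
    rcases hx with rfl | rfl <;> rcases hy with rfl | rfl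
    · rfl
    · exact SimpleGraph.Adj.reachable (by exact h)
    · exact SimpleGraph.Adj.reachable (by exact h.symm)
    · rfl
  have hnc : ∀ v, ¬ (G.induce ({p, q} : Set V)).IsCutVertex v := by
    rintro c ⟨u, w, hu, hw, -, hnr⟩
    have huw : u = w := by
      have h1 : u.1 = p ∨ u.1 = q := u.2
      have h2 : w.1 = p ∨ w.1 = q := w.2
      have h3 : c.1 = p ∨ c.1 = q := c.2
      have h4 : u.1 ≠ c.1 := fun he => hu (Subtype.ext he)
      have h5 : w.1 ≠ c.1 := fun he => hw (Subtype.ext he)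
      apply Subtype.ext
      rcases h1 with e1 | e1 <;> rcases h2 with e2 | e2 <;>
        rcases h3 with e3 | e3 <;> simp_all
    subst huw
    exact hnr (SimpleGraph.Reachable.refl _)
  obtain ⟨B, hAB, hblk⟩ := exists_block_superset ⟨p, Or.inl rfl⟩ hconn hnc
  exact ⟨B, hAB (Or.inl rfl), hAB (Or.inr rfl), hblk⟩

lemma l4aux [Fintype V] {G : SimpleGraph V} {w : V} :
    ∀ m : ℕ, ∀ p : ℕ → V, (∀ i ≤ m, p i ≠ w) → (∀ i < m, G.Adj (p i) (p (i + 1))) →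
    ∀ B₁ B₂ : Set V, G.IsBlock B₁ → G.IsBlock B₂ → w ∈ B₁ → w ∈ B₂ → B₁ ≠ B₂ →
    p 0 ∈ B₁ → p m ∈ B₂ → False := by
  intro m
  induction m using Nat.strong_induction_on with
  | _ m IH =>
  intro p hpw hadj B₁ B₂ hB₁ hB₂ hwB₁ hwB₂ hB12 hp0 hpm
  have hE : ∀ i : ℕ, ∃ Bl : Set V, G.IsBlock Bl ∧
      (i < m → p i ∈ Bl ∧ p (i + 1) ∈ Bl) ∧ (¬ i < m → Bl = B₂) := by
    intro i
    by_cases h : i < m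
    · obtain ⟨Bl, h1, h2, h3⟩ := edge_block (hadj i h)
      exact ⟨Bl, h3, fun _ => ⟨h1, h2⟩, fun h' => absurd h h'⟩
    · exact ⟨B₂, hB₂, fun h' => absurd h' h, fun _ => rfl⟩
  choose F hF1 hF2 hF3 using hE
  obtain ⟨j, hjm, hjB⟩ := key' (G := G) m B₁ F hB₁ (fun i _ => hF1 i)
    (fun i hi => by
      by_cases h : i + 1 < m
      · exact ⟨p (i + 1), (hF2 i hi).2, (hF2 (i + 1) h).1⟩
      · refine ⟨p (i + 1), (hF2 i hi).2, ?_⟩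
        rw [hF3 (i + 1) (by omega), show i + 1 = m by omega]
        exact hpm)
    (p 0) w hp0
    (by
      by_cases h : 0 < m
      · exact (hF2 0 h).1
      · rw [hF3 0 (by omega)]
        rw [show m = 0 by omega] at hpm
        exact hpm)
    hwB₁ (by rw [hF3 m (by omega)]; exact hwB₂) (hpw 0 (by omega))
  by_cases hjlt : j < m
  · have hp1 : p (j + 1) ∈ B₁ := hjB ▸ (hF2 j hjlt).2
    refine IH (m - (j + 1)) (by omega) (fun i => p (j + 1 + i))
      (fun i hi => hpw (j + 1 + i) (by omega))
      (fun i hi => by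
        show G.Adj (p (j + 1 + i)) (p (j + 1 + (i + 1)))
        rw [show j + 1 + (i + 1) = (j + 1 + i) + 1 by omega]
        exact hadj (j + 1 + i) (by omega))
      B₁ B₂ hB₁ hB₂ hwB₁ hwB₂ hB12 (by simpa using hp1) ?_
    show p (j + 1 + (m - (j + 1))) ∈ B₂
    rw [show j + 1 + (m - (j + 1)) = m by omega]
    exact hpm
  · have : j = m := by omega
    subst this
    exact hB12 ((hF3 j (by omega)) ▸ hjB).symm

/-- A vertex lying in two distinct blocks is a cut vertex. -/
lemma cut_of_mem_two_blocks [Fintype V] {G : SimpleGraph V} {B₁ B₂ : Set V} {w : V}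
    (hB₁ : G.IsBlock B₁) (hB₂ : G.IsBlock B₂) (hw₁ : w ∈ B₁) (hw₂ : w ∈ B₂)
    (hne : B₁ ≠ B₂) : G.IsCutVertex w := by
  have hu : ∃ u ∈ B₁, u ≠ w := by
    by_contra h
    push_neg at h
    have hsub : B₁ ⊆ B₂ := by
      intro x hx
      rw [h x hx]
      exact hw₂
    exact hne (block_eq_of_subset hB₁ hB₂ hsub)
  have hx : ∃ x ∈ B₂, x ≠ w := by
    by_contra h
    push_neg at h
    have hsub : B₂ ⊆ B₁ := by
      intro x hxx
      rw [h x hxx]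
      exact hw₁
    exact hne (block_eq_of_subset hB₂ hB₁ hsub).symm
  obtain ⟨u, huB, huw⟩ := hu
  obtain ⟨x, hxB, hxw⟩ := hx
  refine ⟨u, x, huw, hxw, ?_, ?_⟩
  · have r1 : (G.induce B₁).Reachable ⟨u, huB⟩ ⟨w, hw₁⟩ :=
      hB₁.2.1.preconnected _ _
    have r2 : (G.induce B₂).Reachable ⟨w, hw₂⟩ ⟨x, hxB⟩ :=
      hB₂.2.1.preconnected _ _
    have f1 : G.Reachable u w :=
      r1.map (⟨Subtype.val, fun ha => ha⟩ : G.induce B₁ →g G)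
    have f2 : G.Reachable w x :=
      r2.map (⟨Subtype.val, fun ha => ha⟩ : G.induce B₂ →g G)
    exact f1.trans f2
  · intro hr
    obtain ⟨wk⟩ := hr
    refine l4aux wk.length (fun i => (wk.getVert i).1)
      (fun i _ => (wk.getVert i).2) (fun i hi => wk.adj_getVert_succ hi)
      B₁ B₂ hB₁ hB₂ hw₁ hw₂ hne ?_ ?_
    · show ((wk.getVert 0 : {x : V // x ≠ w}) : V) ∈ B₁
      rw [wk.getVert_zero]
      exact huB
    · show ((wk.getVert wk.length : {x : V // x ≠ w}) : V) ∈ B₂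
      rw [wk.getVert_length]
      exact hxB

end Helpers

/-- **Step in Jayanthan–Sarkar, Lemma 3.1.** Let `G` be a connected graph with at least
two blocks, each block a cycle or a clique.  Let `S` be a leaf of the block graph `B(G)`
(a block of `B(G)` with at most one cut vertex of `B(G)`), consisting of at least two
blocks of `G` which pairwise intersect exactly in a common cut vertex `v`.  Then there is
a block `Hᵢ ∈ S` such that for every other block `Hⱼ ∈ S`, the vertices of `Hⱼ` other
than `v` lie in no block of `G` other than `Hⱼ`. -/


theorem exists_block_of_leaf {V : Type*} [Fintype V]
    (G : SimpleGraph V) (hconn : G.Connected)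
    (hblocks : ∀ B : Set V, G.IsBlock B →
      (∃ r : ℕ, 3 ≤ r ∧ Nonempty ((G.induce B) ≃g cycleGraph r)) ∨ G.IsClique B)
    (htwo : ∃ B₁ B₂ : Set V, G.IsBlock B₁ ∧ G.IsBlock B₂ ∧ B₁ ≠ B₂)
    (S : Set {B : Set V // G.IsBlock B})
    (hleaf : (blockGraphOf G).IsBlock S ∧
      {b | b ∈ S ∧ (blockGraphOf G).IsCutVertex b}.Subsingleton)
    (hS : S.Nontrivial) (v : V)
    (hv : ∀ b₁ b₂, b₁ ∈ S → b₂ ∈ S → b₁ ≠ b₂ → b₁.1 ∩ b₂.1 = {v}) :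
    ∃ Hi ∈ S, ∀ Hj ∈ S, Hj ≠ Hi →
      ∀ w ∈ Hj.1, w ≠ v → ∀ B : Set V, G.IsBlock B → w ∈ B → B = Hj.1 := by
  classical
  -- a block of `S` is "bad" if one of its vertices other than `v` lies in another block
  have hbadcut : ∀ Hj ∈ S,
      (∃ w ∈ Hj.1, w ≠ v ∧ ∃ B : Set V, G.IsBlock B ∧ w ∈ B ∧ B ≠ Hj.1) →
      (blockGraphOf G).IsCutVertex Hj := by
    intro Hj hHj hbad
    obtain ⟨w, hwHj, hwv, B, hB, hwB, hBne⟩ := hbad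
    obtain ⟨Hk, hHk, hkj⟩ := hS.exists_ne Hj
    have hm : v ∈ Hk.1 ∩ Hj.1 := by
      rw [hv Hk Hj hHk hHj hkj]
      exact rfl
    have hcw : G.IsCutVertex w := cut_of_mem_two_blocks hB Hj.2 hwB hwHj hBne
    have hcv : G.IsCutVertex v :=
      cut_of_mem_two_blocks Hj.2 Hk.2 hm.2 hm.1 (fun h => hkj (Subtype.ext h).symm)
    have hneBj : (⟨B, hB⟩ : {B : Set V // G.IsBlock B}) ≠ Hj :=
      fun h => hBne (congrArg Subtype.val h)
    have hadj1 : (blockGraphOf G).Adj ⟨B, hB⟩ Hj := by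
      simp only [blockGraphOf, SimpleGraph.fromRel_adj]
      exact ⟨hneBj, Or.inl ⟨w, hwB, hwHj, hcw⟩⟩
    have hadj2 : (blockGraphOf G).Adj Hj Hk := by
      simp only [blockGraphOf, SimpleGraph.fromRel_adj]
      exact ⟨fun h => hkj h.symm, Or.inl ⟨v, hm.2, hm.1, hcv⟩⟩
    refine ⟨⟨B, hB⟩, Hk, hneBj, hkj, hadj1.reachable.trans hadj2.reachable, ?_⟩
    intro hr
    obtain ⟨wk⟩ := hr
    obtain ⟨j, hj, hjD⟩ := key' (G := G) wk.length Hj.1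
      (fun i => ((wk.getVert i).1).1) Hj.2 (fun i _ => ((wk.getVert i).1).2)
      (fun i hi => by
        have hadj' : (blockGraphOf G).Adj (wk.getVert i).1 (wk.getVert (i + 1)).1 :=
          wk.adj_getVert_succ hi
        simp only [blockGraphOf, SimpleGraph.fromRel_adj] at hadj'
        rcases hadj'.2 with ⟨x, hx1, hx2, -⟩ | ⟨x, hx1, hx2, -⟩
        · exact ⟨x, hx1, hx2⟩
        · exact ⟨x, hx2, hx1⟩)
      w v hwHj
      (by
        show w ∈ ((wk.getVert 0).1).1
        rw [wk.getVert_zero]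
        exact hwB)
      hm.2
      (by
        show v ∈ ((wk.getVert wk.length).1).1
        rw [wk.getVert_length]
        exact hm.1)
      hwv
    exact (wk.getVert j).2 (Subtype.ext hjD)
  by_cases hex : ∃ Hi ∈ S, ∃ w ∈ Hi.1, w ≠ v ∧ ∃ B : Set V, G.IsBlock B ∧ w ∈ B ∧ B ≠ Hi.1
  · obtain ⟨Hi, hHi, hbad⟩ := hex
    refine ⟨Hi, hHi, ?_⟩
    intro Hj hHj hne w hw hwv B hB hwB
    by_contra hBne
    exact hne (hleaf.2 ⟨hHj, hbadcut Hj hHj ⟨w, hw, hwv, B, hB, hwB, hBne⟩⟩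
      ⟨hHi, hbadcut Hi hHi hbad⟩)
  · push_neg at hex
    obtain ⟨Hi, hHi, -, -, -⟩ := hS
    refine ⟨Hi, hHi, ?_⟩
    intro Hj hHj hne w hw hwv B hB hwB
    by_contra hBne
    exact hBne (hex Hj hHj w hw hwv B hB hwB)
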